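/- Let N ≥ 1, d ≥ 0, and χ be integers with χ ≥ Nd, and let y be an indeterminate. In the field of rational functions ℚ(y), consider the rational differential form ω = t^{(N+1)d - χ} (1-t)^{χ - Nd} (1 - y t)^{-(d+1)} dt. Then 1 + (-1)^{(N-1)d + χ} y^{d+1} · Res_{t=0} ω = Σ_{k=0}^{d} C(-χ + (N+1)d, k) · (-y)^k / (1-y)^{(N+1)d - χ}. -/

import Mathlib

/- STATEMENT 4: For `N ≥ 1`, `d ≥ 0`, `χ ≥ Nd`, and `ω = t^((N+1)d-χ)(1-t)^(χ-Nd)(1-yt)^(-(d+1)) dt`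
over `ℚ(y)`:
`1 + (-1)^((N-1)d+χ) y^(d+1) Res_{t=0} ω = Σ_{k=0}^d C(-χ+(N+1)d, k) (-y)^k / (1-y)^((N+1)d-χ)`. -/

open PowerSeries

/-- Generalized binomial coefficient `C(a,k)` in `ℚ(y)`. -/
noncomputable def gchoose (a : ℤ) (k : ℕ) : RatFunc ℚ :=
  (∏ i ∈ Finset.range k, ((a : RatFunc ℚ) - (i : RatFunc ℚ))) / (k.factorial : RatFunc ℚ)

/-- The power-series part `(1-t)^(χ-Nd) (1-yt)^(-(d+1))` of `ω`. -/
noncomputable def omegaSeries (N d : ℕ) (χ : ℤ) : PowerSeries (RatFunc ℚ) :=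
  (1 - PowerSeries.X) ^ (χ - (N : ℤ) * d).toNat *
    ((1 - PowerSeries.C (R := RatFunc ℚ) RatFunc.X * PowerSeries.X) ^ (d + 1))⁻¹

/-- `Res_{t=0} ω`: the coefficient of `t^(-1)` of `t^((N+1)d-χ) ⬝ omegaSeries`. -/
noncomputable def resOmega (N d : ℕ) (χ : ℤ) : RatFunc ℚ :=
  if 0 ≤ χ - ((N : ℤ) + 1) * d - 1 then
    PowerSeries.coeff (R := RatFunc ℚ) (χ - ((N : ℤ) + 1) * d - 1).toNat (omegaSeries N d χ)
  else 0

open Finset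

section MyAux
variable {R : Type*} [CommRing R]

private lemma myNegOnePowCongr {p q : ℕ} (h : p % 2 = q % 2) : (-1 : R) ^ p = (-1) ^ q := by
  rw [neg_one_pow_eq_pow_mod_two p, h, ← neg_one_pow_eq_pow_mod_two q]

/-- binomial theorem in the needed shape -/
private lemma myBin (y : R) (n : ℕ) :
    (1 - y) ^ n = ∑ k ∈ range (n + 1), (n.choose k : R) * (-y) ^ k := by
  rw [sub_eq_add_neg, add_comm, add_pow]
  exact Finset.sum_congr rfl fun j hj => by rw [one_pow, mul_one, mul_comm]

private lemma myG (y : R) (a d : ℕ) :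
    (1 - y) * ∑ k ∈ range (d + 1), ((a + 1 + k).choose k : R) * y ^ k
      = ∑ k ∈ range (d + 1), ((a + k).choose k : R) * y ^ k
        - ((a + d + 1).choose d : R) * y ^ (d + 1) := by
  induction d with
  | zero => simp
  | succ d ih =>
      rw [Finset.sum_range_succ, Finset.sum_range_succ (f := fun k => ((a + k).choose k : R) * y ^ k)]
      have hp : (((a + d + 2).choose (d + 1) : ℕ) : R)
          = ((a + d + 1).choose d : R) + ((a + d + 1).choose (d + 1) : R) := by
        rw [show a + d + 2 = (a + d + 1) + 1 by omega, Nat.choose_succ_succ]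
        push_cast; ring
      have e1 : a + 1 + (d + 1) = a + d + 2 := by omega
      have e2 : a + (d + 1) = a + d + 1 := by omega
      rw [e1, e2]
      rw [show a + d + 1 + 1 = a + d + 2 by omega]
      linear_combination ih + y ^ (d + 1) * hp

/-- the key combinatorial identity -/
private lemma myL4 (y : R) (a d : ℕ) :
    (1 : R) - ∑ k ∈ range (a + 1),
        (-1) ^ k * (((a + d + 1).choose (d + 1 + k) : ℕ) : R) * ((d + k).choose d : R) * y ^ (d + 1 + k)
      = (1 - y) ^ (a + 1) * ∑ k ∈ range (d + 1), ((a + k).choose k : R) * y ^ k := by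
  induction a with
  | zero =>
      have h := geom_sum_mul y (d + 1)
      have h2 : ∑ k ∈ range (d + 1), (((0 + k).choose k : ℕ) : R) * y ^ k
          = ∑ k ∈ range (d + 1), y ^ k :=
        Finset.sum_congr rfl fun k _ => by simp
      rw [Finset.sum_range_one, h2]
      simp only [pow_zero, one_mul, zero_add, add_zero, Nat.choose_self, Nat.cast_one, mul_one]
      linear_combination h
  | succ a ih =>
      have hsplit : ∑ k ∈ range (a + 2),
          (-1 : R) ^ k * (((a + 1 + d + 1).choose (d + 1 + k) : ℕ) : R) * ((d + k).choose d : R) * y ^ (d + 1 + k)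
          = (∑ k ∈ range (a + 2),
              (-1 : R) ^ k * (((a + d + 1).choose (d + k) : ℕ) : R) * ((d + k).choose d : R) * y ^ (d + 1 + k))
            + ∑ k ∈ range (a + 2),
              (-1 : R) ^ k * (((a + d + 1).choose (d + 1 + k) : ℕ) : R) * ((d + k).choose d : R) * y ^ (d + 1 + k) := by
        rw [← Finset.sum_add_distrib]
        refine Finset.sum_congr rfl fun k _ => ?_
        have : (a + 1 + d + 1).choose (d + 1 + k)
            = (a + d + 1).choose (d + k) + (a + d + 1).choose (d + k + 1) := by
          rw [show a + 1 + d + 1 = (a + d + 1) + 1 by omega, show d + 1 + k = (d + k) + 1 by omega,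
            Nat.choose_succ_succ]
        rw [this, show d + k + 1 = d + 1 + k by omega]
        push_cast; ring
      have hT2 : ∑ k ∈ range (a + 2),
          (-1 : R) ^ k * (((a + d + 1).choose (d + 1 + k) : ℕ) : R) * ((d + k).choose d : R) * y ^ (d + 1 + k)
          = ∑ k ∈ range (a + 1),
          (-1 : R) ^ k * (((a + d + 1).choose (d + 1 + k) : ℕ) : R) * ((d + k).choose d : R) * y ^ (d + 1 + k) := by
        rw [Finset.sum_range_succ, Nat.choose_eq_zero_of_lt (by omega)]
        simp
      have hT1 : ∑ k ∈ range (a + 2),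
          (-1 : R) ^ k * (((a + d + 1).choose (d + k) : ℕ) : R) * ((d + k).choose d : R) * y ^ (d + 1 + k)
          = ((a + d + 1).choose d : R) * y ^ (d + 1) * (1 - y) ^ (a + 1) := by
        rw [myBin y (a + 1), Finset.mul_sum]
        refine Finset.sum_congr rfl fun k hk => ?_
        have hk' := Finset.mem_range.mp hk
        have hc : (a + d + 1).choose (d + k) * (d + k).choose d
            = (a + d + 1).choose d * (a + 1).choose k := by
          have h := Nat.choose_mul (n := a + d + 1) (k := d + k) (s := d)
            (by omega)
          rw [h, show a + d + 1 - d = a + 1 by omega, show d + k - d = k by omega]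
        have hc' : (((a + d + 1).choose (d + k) : ℕ) : R) * ((d + k).choose d : R)
            = ((a + d + 1).choose d : R) * ((a + 1).choose k : R) := by
          exact_mod_cast congrArg (fun n : ℕ => (n : R)) hc
        have hy : y ^ (d + 1 + k) = y ^ (d + 1) * y ^ k := by rw [← pow_add]
        calc (-1 : R) ^ k * (((a + d + 1).choose (d + k) : ℕ) : R) * ((d + k).choose d : R) * y ^ (d + 1 + k)
            = ((((a + d + 1).choose (d + k) : ℕ) : R) * ((d + k).choose d : R)) * ((-1) ^ k * y ^ (d + 1 + k)) := by
              ring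
          _ = ((a + d + 1).choose d : R) * y ^ (d + 1) * (((a + 1).choose k : R) * (-y) ^ k) := by
              rw [hc', hy, neg_pow]; ring
      rw [hsplit, hT2, hT1]
      have hg := myG y a d
      linear_combination ih - (1 - y) ^ (a + 1) * hg

private lemma mySumTransform (y : R) (a d : ℕ) :
    (-1 : R) ^ (a + 1) * y ^ (d + 1) *
        ∑ i ∈ range (a + 1),
          ((-1) ^ i * (((a + d + 1).choose i : ℕ) : R)) * (y ^ (a - i) * ((d + (a - i)).choose d : R))
      = - ∑ k ∈ range (a + 1),
          (-1) ^ k * (((a + d + 1).choose (d + 1 + k) : ℕ) : R) * ((d + k).choose d : R) * y ^ (d + 1 + k) := by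
  rw [← Finset.sum_range_reflect (fun k =>
    (-1 : R) ^ k * (((a + d + 1).choose (d + 1 + k) : ℕ) : R) * ((d + k).choose d : R) * y ^ (d + 1 + k)) (a + 1)]
  rw [Finset.mul_sum, ← Finset.sum_neg_distrib]
  refine Finset.sum_congr rfl fun j hj => ?_
  have hj' : j ≤ a := by have := Finset.mem_range.mp hj; omega
  simp only [Nat.add_sub_cancel]
  have e2 : d + 1 + (a - j) = a + d + 1 - j := by omega
  rw [e2, Nat.choose_symm (by omega : j ≤ a + d + 1)]
  have hy : y ^ (d + 1) * y ^ (a - j) = y ^ (a + d + 1 - j) := by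
    rw [← pow_add, show d + 1 + (a - j) = a + d + 1 - j by omega]
  have hs : (-1 : R) ^ (a + 1) * (-1 : R) ^ j = -(-1 : R) ^ (a - j) := by
    rw [← pow_add, myNegOnePowCongr (show (a + 1 + j) % 2 = ((a - j) + 1) % 2 by omega),
      pow_succ, mul_neg_one]
  linear_combination (((a + d + 1).choose j : R) * (((d + (a - j)).choose d : R)) * y ^ (a + d + 1 - j)) * hs
    + ((-1 : R) ^ (a + 1) * (-1 : R) ^ j * ((a + d + 1).choose j : R) * ((d + (a - j)).choose d : R)) * hy

private lemma myCoeffOneSubPow (m i : ℕ) :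
    PowerSeries.coeff (R := R) i ((1 - PowerSeries.X) ^ m) = (-1) ^ i * (m.choose i : R) := by
  have h : ((1 : R⟦X⟧) - PowerSeries.X) ^ m
      = ∑ j ∈ range (m + 1), PowerSeries.C (R := R) ((-1) ^ j * (m.choose j : R)) * PowerSeries.X ^ j := by
    rw [sub_eq_add_neg, add_comm, add_pow]
    refine Finset.sum_congr rfl fun j hj => ?_
    rw [one_pow, mul_one, neg_pow]
    rw [show ((m.choose j : ℕ) : R⟦X⟧) = PowerSeries.C (R := R) ((m.choose j : R)) by
      rw [← map_natCast (PowerSeries.C (R := R))]]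
    rw [show ((-1 : R⟦X⟧)) ^ j = PowerSeries.C (R := R) ((-1) ^ j) by rw [map_pow, map_neg, map_one]]
    rw [map_mul]
    ring
  rw [h, map_sum]
  simp only [PowerSeries.coeff_C_mul_X_pow]
  rw [Finset.sum_ite_eq]
  by_cases hi : i ∈ range (m + 1)
  · rw [if_pos hi]
  · rw [if_neg hi]
    rw [Nat.choose_eq_zero_of_lt (by simpa using hi)]
    simp

end MyAux

instance myRatFuncCharZero : CharZero (RatFunc ℚ) :=
  charZero_of_injective_algebraMap (algebraMap ℚ (RatFunc ℚ)).injective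

private lemma myOneSubXne : (1 - RatFunc.X : RatFunc ℚ) ≠ 0 := by
  have h : (1 - RatFunc.X : RatFunc ℚ)
      = algebraMap (Polynomial ℚ) (RatFunc ℚ) (1 - Polynomial.X) := by
    rw [map_sub, map_one, RatFunc.algebraMap_X]
  rw [h]
  apply RatFunc.algebraMap_ne_zero
  intro hh
  have := congrArg (fun p => Polynomial.coeff p 1) hh
  norm_num [Polynomial.coeff_one] at this

private lemma myRescaleX : PowerSeries.rescale RatFunc.X (PowerSeries.X : (RatFunc ℚ)⟦X⟧)
    = PowerSeries.C (R := RatFunc ℚ) RatFunc.X * PowerSeries.X := by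
  ext n
  simp only [PowerSeries.coeff_rescale, PowerSeries.coeff_X, PowerSeries.coeff_C_mul]
  split
  · rename_i hn; subst hn; simp
  · simp

private lemma myBinv (d : ℕ) :
    (((1 : (RatFunc ℚ)⟦X⟧) - PowerSeries.C (R := RatFunc ℚ) RatFunc.X * PowerSeries.X) ^ (d + 1))⁻¹
      = PowerSeries.mk (fun n => RatFunc.X ^ n * ((d + n).choose d : RatFunc ℚ)) := by
  have h0 : PowerSeries.constantCoeff (R := RatFunc ℚ)
      (((1 : (RatFunc ℚ)⟦X⟧) - PowerSeries.C (R := RatFunc ℚ) RatFunc.X * PowerSeries.X) ^ (d + 1)) ≠ 0 := by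
    rw [map_pow, map_sub, map_one, map_mul, PowerSeries.constantCoeff_X, mul_zero, sub_zero,
      one_pow]
    exact one_ne_zero
  rw [PowerSeries.inv_eq_iff_mul_eq_one h0]
  have key := congrArg (PowerSeries.rescale (RatFunc.X : RatFunc ℚ))
    (PowerSeries.mk_add_choose_mul_one_sub_pow_eq_one (S := RatFunc ℚ) (d := d))
  rw [map_mul, map_pow, map_sub, map_one, myRescaleX, PowerSeries.rescale_mk] at key
  exact key

private lemma myGchooseNat (b k : ℕ) : gchoose (b : ℤ) k = (b.choose k : RatFunc ℚ) := by
  have hprod : ∏ i ∈ Finset.range k, (((b : ℤ) : RatFunc ℚ) - (i : RatFunc ℚ))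
      = (b.descFactorial k : RatFunc ℚ) := by
    induction k with
    | zero => simp
    | succ k ih =>
        rw [Finset.prod_range_succ, ih, Nat.descFactorial_succ]
        by_cases hkb : k ≤ b
        · push_cast [hkb]; ring
        · rw [Nat.descFactorial_eq_zero_iff_lt.mpr (by omega : b < k)]
          simp
  rw [gchoose, hprod, Nat.descFactorial_eq_factorial_mul_choose]
  have hf : (k.factorial : RatFunc ℚ) ≠ 0 := Nat.cast_ne_zero.mpr k.factorial_ne_zero
  push_cast
  field_simp

private lemma myGchooseNeg (a k : ℕ) : gchoose (-((a : ℤ) + 1)) k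
    = (-1) ^ k * ((a + k).choose k : RatFunc ℚ) := by
  have hprod : ∏ i ∈ Finset.range k, (-((a : RatFunc ℚ) + 1) - (i : RatFunc ℚ))
      = (-1) ^ k * ((a + 1).ascFactorial k : RatFunc ℚ) := by
    induction k with
    | zero => simp
    | succ k ih =>
        rw [Finset.prod_range_succ, ih, Nat.ascFactorial_succ]
        push_cast
        ring
  rw [gchoose]
  push_cast
  rw [hprod, Nat.ascFactorial_eq_factorial_mul_choose]
  have hf : (k.factorial : RatFunc ℚ) ≠ 0 := Nat.cast_ne_zero.mpr k.factorial_ne_zero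
  push_cast
  field_simp

theorem residue_identity (N d : ℕ) (χ : ℤ) (hN : 1 ≤ N) (hχ : (N : ℤ) * d ≤ χ) :
    1 + (-1 : RatFunc ℚ) ^ ((N - 1) * d + χ.toNat) * RatFunc.X ^ (d + 1) * resOmega N d χ
      = ∑ k ∈ Finset.range (d + 1),
          gchoose (-χ + ((N : ℤ) + 1) * d) k * (-(RatFunc.X : RatFunc ℚ)) ^ k /
            ((1 - RatFunc.X : RatFunc ℚ) ^ (((N : ℤ) + 1) * d - χ)) := by
  classical
  set w : ℕ := N * d with hw
  have hwd : d ≤ w := by rw [hw]; exact Nat.le_mul_of_pos_left d (by omega)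
  have hNw : (N : ℤ) * d = (w : ℤ) := by rw [hw]; push_cast; ring
  have hN1w : ((N : ℤ) + 1) * d = (w : ℤ) + d := by rw [hw]; push_cast; ring
  set m : ℕ := (χ - (N : ℤ) * d).toNat with hm
  have hχ' : (w : ℤ) ≤ χ := by rw [← hNw]; exact hχ
  have hχm : χ = (w : ℤ) + m := by rw [hm, hNw]; omega
  by_cases hcase : m ≤ d
  · -- residue vanishes
    set b : ℕ := d - m with hb
    have hres : resOmega N d χ = 0 := by
      rw [resOmega, if_neg]
      intro hcontra
      rw [hN1w] at hcontra
      omega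
    rw [hres, mul_zero, add_zero]
    have hgc : -χ + ((N : ℤ) + 1) * d = (b : ℤ) := by rw [hN1w]; omega
    have hzp : ((N : ℤ) + 1) * d - χ = (b : ℤ) := by rw [hN1w]; omega
    rw [hgc, hzp, zpow_natCast, ← Finset.sum_div]
    have hsum : ∑ k ∈ range (d + 1), gchoose (b : ℤ) k * (-RatFunc.X) ^ k
        = (1 - RatFunc.X : RatFunc ℚ) ^ b := by
      calc ∑ k ∈ range (d + 1), gchoose (b : ℤ) k * (-RatFunc.X) ^ k
          = ∑ k ∈ range (d + 1), (b.choose k : RatFunc ℚ) * (-RatFunc.X) ^ k :=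
            Finset.sum_congr rfl fun k _ => by rw [myGchooseNat]
        _ = ∑ k ∈ range (b + 1), (b.choose k : RatFunc ℚ) * (-RatFunc.X) ^ k := by
            refine (Finset.sum_subset (Finset.range_subset_range.mpr (by omega : b + 1 ≤ d + 1))
              fun x _ hx => ?_).symm
            rw [Nat.choose_eq_zero_of_lt (by simpa using hx)]
            simp
        _ = (1 - RatFunc.X : RatFunc ℚ) ^ b := (myBin _ b).symm
    rw [hsum, div_self (pow_ne_zero b myOneSubXne)]
  · -- main case
    push_neg at hcase
    set a : ℕ := m - d - 1 with ha2
    have hma : m = a + d + 1 := by omega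
    have hχa : χ = (w : ℤ) + a + d + 1 := by rw [hχm, hma]; push_cast; ring
    have hpos : 0 ≤ χ - ((N : ℤ) + 1) * d - 1 := by rw [hN1w]; omega
    have htn : (χ - ((N : ℤ) + 1) * d - 1).toNat = a := by rw [hN1w]; omega
    have hmn : (χ - (N : ℤ) * d).toNat = a + d + 1 := by rw [hNw]; omega
    have homega : omegaSeries N d χ = (1 - PowerSeries.X) ^ (a + d + 1) *
        PowerSeries.mk (fun n => RatFunc.X ^ n * ((d + n).choose d : RatFunc ℚ)) := by
      rw [omegaSeries, hmn, myBinv]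
    have hres : resOmega N d χ = ∑ i ∈ range (a + 1),
        ((-1) ^ i * (((a + d + 1).choose i : ℕ) : RatFunc ℚ)) *
          (RatFunc.X ^ (a - i) * ((d + (a - i)).choose d : RatFunc ℚ)) := by
      rw [resOmega, if_pos hpos, htn, homega, PowerSeries.coeff_mul,
        Finset.Nat.sum_antidiagonal_eq_sum_range_succ_mk]
      exact Finset.sum_congr rfl fun i hi => by rw [myCoeffOneSubPow, PowerSeries.coeff_mk]
    have hsign : (-1 : RatFunc ℚ) ^ ((N - 1) * d + χ.toNat) = (-1) ^ (a + 1) := by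
      have h1 : (N - 1) * d = w - d := by rw [hw, Nat.sub_mul, one_mul]
      have h2 : χ.toNat = w + a + d + 1 := by omega
      rw [h1, h2]
      exact myNegOnePowCongr (by omega)
    rw [hres, hsign, mySumTransform, ← sub_eq_add_neg, myL4]
    have hgc : -χ + ((N : ℤ) + 1) * d = -((a : ℤ) + 1) := by rw [hN1w]; omega
    have hzp : ((N : ℤ) + 1) * d - χ = -(((a + 1 : ℕ)) : ℤ) := by rw [hN1w]; push_cast; omega
    rw [hgc, hzp, zpow_neg, zpow_natCast]
    have hterm : ∀ k ∈ range (d + 1),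
        gchoose (-((a : ℤ) + 1)) k * (-RatFunc.X) ^ k / (((1 - RatFunc.X : RatFunc ℚ) ^ (a + 1))⁻¹)
          = (((a + k).choose k : ℕ) : RatFunc ℚ) * RatFunc.X ^ k * (1 - RatFunc.X) ^ (a + 1) :=
      fun k _ => by
        rw [myGchooseNeg, div_inv_eq_mul]
        have hkk : (-1 : RatFunc ℚ) ^ k * (-RatFunc.X) ^ k = RatFunc.X ^ k := by
          rw [neg_pow (RatFunc.X : RatFunc ℚ) k, ← mul_assoc, ← mul_pow]; norm_num
        linear_combination (((a + k).choose k : RatFunc ℚ) * (1 - RatFunc.X : RatFunc ℚ) ^ (a + 1)) * hkk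
    rw [Finset.sum_congr rfl hterm, ← Finset.sum_mul]
    exact mul_comm _ _
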